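/- arXiv:1604.07133 — 2 statements merged into one kernel-verified Lean document; each statement's English description precedes it below -/
import Mathlib

section
/- For n ≥ 4, the spectrum of the commuting graph of the quasidihedral group QD_{2^n} is {(-1) with multiplicity 2^n - 2^{n-2} - 3, 1 with multiplicity 2^{n-2}, and 2^{n-1} - 3 with multiplicity 1}. -/
open Polynomial Matrix

/-- The commuting graph of a group: vertices are non-central elements,
adjacent iff distinct and commuting. -/
def commGraph (G : Type*) [Group G] : SimpleGraph {x : G // x ∉ Subgroup.center G} where
  Adj x y := x ≠ y ∧ (x : G) * y = y * x
  symm := by constructor; rintro x y ⟨h1, h2⟩; exact ⟨h1.symm, h2.symm⟩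
  loopless := by constructor; rintro x ⟨h, _⟩; exact h rfl

/-- The characteristic polynomial (over ℝ) of the adjacency matrix of the
commuting graph of a finite group. -/
noncomputable def commCharpoly (G : Type*) [Group G] [Finite G] : Polynomial ℝ := by
  classical
  have : Fintype G := Fintype.ofFinite G
  exact (SimpleGraph.adjMatrix ℝ (commGraph G)).charpoly

/-- The disjoint union of `k` copies of the complete graph on `m` vertices. -/
def completeUnion (k m : ℕ) : SimpleGraph (Fin k × Fin m) where
  Adj x y := x ≠ y ∧ x.1 = y.1
  symm := by constructor; rintro x y ⟨h1, h2⟩; exact ⟨h1.symm, h2.symm⟩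
  loopless := by constructor; rintro x ⟨h, _⟩; exact h rfl

lemma copr_succ (m : ℕ) : Nat.Coprime (m+1) m := by
  unfold Nat.Coprime
  rw [Nat.gcd_self_add_left m 1, Nat.gcd_one_left]

lemma modhelp (K : ℕ) (hK : Even K) (hK2 : 2 ≤ K) (x : ℤ) :
    ((4 * K : ℕ) : ℤ) ∣ (2 * ((K : ℤ) - 1)) * x ↔ ((2 * K : ℕ) : ℤ) ∣ x := by
  have hco : IsCoprime ((2 * K : ℕ) : ℤ) ((K : ℤ) - 1) := by
    rw [Int.isCoprime_iff_gcd_eq_one]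
    have h1 : ((K : ℤ) - 1) = ((K - 1 : ℕ) : ℤ) := by
      have : 1 ≤ K := by omega
      push_cast [this]; ring
    rw [h1, Int.gcd_natCast_natCast]
    have hodd : ¬ (2 ∣ (K - 1)) := by
      rcases hK with ⟨m, hm⟩; omega
    apply Nat.coprime_mul_iff_left.mpr
    constructor
    · exact Nat.prime_two.coprime_iff_not_dvd.mpr hodd
    · have h := copr_succ (K - 1)
      have h2 : K - 1 + 1 = K := by omega
      rwa [h2] at h
  constructor
  · intro h
    have h2 : ((2 * K : ℕ) : ℤ) ∣ ((K : ℤ) - 1) * x := by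
      have h4 : (2:ℤ) * (((2 * K : ℕ) : ℤ)) ∣ 2 * (((K : ℤ) - 1) * x) := by
        have e1 : (2:ℤ) * (((K : ℤ) - 1) * x) = (2 * ((K : ℤ) - 1)) * x := by ring
        have e2 : (2:ℤ) * (((2*K : ℕ) : ℤ)) = ((4 * K : ℕ) : ℤ) := by push_cast; ring
        rw [e1, e2]; exact h
      exact (mul_dvd_mul_iff_left (by norm_num : (2:ℤ) ≠ 0)).mp h4
    exact hco.dvd_of_dvd_mul_left h2
  · intro h
    rcases h with ⟨c, rfl⟩
    refine ⟨((K:ℤ) - 1) * c, ?_⟩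
    push_cast
    ring

lemma det_smul_one_sub_allOnes (m : ℕ) (hm : 1 ≤ m) (c : ℝ) (hc : c ≠ 0) :
    det (c • (1 : Matrix (Fin m) (Fin m) ℝ) - Matrix.of (fun _ _ => (1:ℝ))) =
      c ^ (m - 1) * (c - m) := by
  have h : c • (1 : Matrix (Fin m) (Fin m) ℝ) - Matrix.of (fun _ _ => (1:ℝ))
      = c • (1 + replicateCol Unit (fun _ => -c⁻¹) * replicateRow Unit (fun _ => (1:ℝ))) := by
    ext i j
    simp [Matrix.mul_apply, Matrix.smul_apply, Matrix.one_apply, mul_comm]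
    rcases eq_or_ne i j with rfl | hij
    · simp only [if_pos rfl]; field_simp; simp; ring
    · simp [hij, hc]
  rw [h, det_smul, det_one_add_replicateCol_mul_replicateRow]
  have : (fun _ : Fin m => (1:ℝ)) ⬝ᵥ (fun _ => -c⁻¹) = -(m * c⁻¹) := by
    simp [dotProduct]
  rw [this]
  have hm' : m = m - 1 + 1 := (Nat.succ_pred_eq_of_pos hm).symm
  rw [Fintype.card_fin, hm', pow_succ]
  field_simp
  rw [Nat.add_sub_cancel]
  ring

lemma eval_charpoly' {m : Type*} [Fintype m] [DecidableEq m] (M : Matrix m m ℝ) (t : ℝ) :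
    M.charpoly.eval t = det (t • (1 : Matrix m m ℝ) - M) := by
  have h := RingHom.map_det (evalRingHom t) (Matrix.charmatrix M)
  have h2 : (Matrix.charmatrix M).map (evalRingHom t) = t • (1 : Matrix m m ℝ) - M := by
    ext i j
    rcases eq_or_ne i j with rfl | hij
    · simp [Matrix.charmatrix_apply_eq, Matrix.one_apply]
    · simp [Matrix.charmatrix_apply_ne _ _ _ hij, Matrix.one_apply, hij]
  rw [Matrix.charpoly]
  calc (Matrix.charmatrix M).det.eval t = (evalRingHom t) (Matrix.charmatrix M).det := rfl
    _ = det ((Matrix.charmatrix M).map (evalRingHom t)) := h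
    _ = det (t • (1 : Matrix m m ℝ) - M) := by rw [h2]

lemma charpoly_of_model {V : Type*} [Fintype V] [DecidableEq V]
    (Gr : SimpleGraph V) [inst : DecidableRel Gr.Adj]
    (p q : ℕ) (hp : 1 ≤ p)
    (e : (Fin p ⊕ Fin q × Fin 2) ≃ V)
    (h1 : ∀ k l : Fin p, Gr.Adj (e (.inl k)) (e (.inl l)) ↔ k ≠ l)
    (h2 : ∀ (k : Fin p) (x : Fin q × Fin 2), ¬ Gr.Adj (e (.inl k)) (e (.inr x)))
    (h3 : ∀ x y : Fin q × Fin 2, Gr.Adj (e (.inr x)) (e (.inr y)) ↔ x ≠ y ∧ x.1 = y.1) :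
    (SimpleGraph.adjMatrix ℝ Gr).charpoly
      = (X + 1) ^ (p - 1 + q) * (X - 1) ^ q * (X - C ((p:ℝ) - 1)) := by
  apply Polynomial.eq_of_infinite_eval_eq
  apply Set.Infinite.mono (s := Set.Ioi (0:ℝ)) ?_ (Set.Ioi_infinite 0)
  intro t ht
  have ht' : t + 1 ≠ 0 := by simp only [Set.mem_Ioi] at ht; linarith
  simp only [Set.mem_setOf_eq]
  rw [eval_charpoly']
  set A := SimpleGraph.adjMatrix ℝ Gr with hA
  have hre : det (t • (1 : Matrix V V ℝ) - A)
      = det (Matrix.reindex e.symm e.symm (t • (1 : Matrix V V ℝ) - A)) :=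
    (Matrix.det_reindex_self e.symm _).symm
  rw [hre]
  have hblocks : Matrix.reindex e.symm e.symm (t • (1 : Matrix V V ℝ) - A)
      = Matrix.fromBlocks
          ((t+1) • (1 : Matrix (Fin p) (Fin p) ℝ) - Matrix.of (fun _ _ => (1:ℝ)))
          0 0
          (t • (1 : Matrix (Fin q × Fin 2) (Fin q × Fin 2) ℝ)
            - Matrix.of (fun x y => if x ≠ y ∧ x.1 = y.1 then (1:ℝ) else 0)) := by
    ext u v
    rcases u with k | x <;> rcases v with l | y
    · simp only [Matrix.reindex_apply, Matrix.submatrix_apply, Equiv.symm_symm,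
        Matrix.sub_apply, Matrix.smul_apply, Matrix.fromBlocks_apply₁₁,
        SimpleGraph.adjMatrix_apply, Matrix.of_apply, hA]
      rcases eq_or_ne k l with rfl | hkl
      · simp [Matrix.one_apply, (h1 k k).not]
      · have : e (Sum.inl k) ≠ e (Sum.inl l) := by
          simp [e.injective.ne_iff, hkl]
        simp [Matrix.one_apply, hkl, this, (h1 k l).mpr hkl]
    · have : ¬ Gr.Adj (e (Sum.inl k)) (e (Sum.inr y)) := h2 k y
      have hne : e (Sum.inl k) ≠ e (Sum.inr y) := by simp [e.injective.ne_iff]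
      simp [hA, Matrix.one_apply, hne, this]
    · have : ¬ Gr.Adj (e (Sum.inr x)) (e (Sum.inl l)) := fun h => h2 l x h.symm
      have hne : e (Sum.inr x) ≠ e (Sum.inl l) := by simp [e.injective.ne_iff]
      simp [hA, Matrix.one_apply, hne, this]
    · simp only [Matrix.reindex_apply, Matrix.submatrix_apply, Equiv.symm_symm,
        Matrix.sub_apply, Matrix.smul_apply, Matrix.fromBlocks_apply₂₂,
        SimpleGraph.adjMatrix_apply, Matrix.of_apply, hA]
      rcases eq_or_ne x y with rfl | hxy
      · simp [Matrix.one_apply, (h3 x x).not]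
      · have : e (Sum.inr x) ≠ e (Sum.inr y) := by simp [e.injective.ne_iff, hxy]
        simp [Matrix.one_apply, hxy, this, h3 x y]
  rw [hblocks, Matrix.det_fromBlocks_zero₁₂]
  have hsecond : det (t • (1 : Matrix (Fin q × Fin 2) (Fin q × Fin 2) ℝ)
      - Matrix.of (fun x y => if x ≠ y ∧ x.1 = y.1 then (1:ℝ) else 0))
      = ((t+1) * (t-1)) ^ q := by
    rw [← Matrix.det_reindex_self (Equiv.prodComm (Fin q) (Fin 2))]
    have : Matrix.reindex (Equiv.prodComm (Fin q) (Fin 2)) (Equiv.prodComm (Fin q) (Fin 2))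
        (t • (1 : Matrix (Fin q × Fin 2) (Fin q × Fin 2) ℝ)
          - Matrix.of (fun x y => if x ≠ y ∧ x.1 = y.1 then (1:ℝ) else 0))
        = Matrix.blockDiagonal (fun _ : Fin q =>
            (t+1) • (1 : Matrix (Fin 2) (Fin 2) ℝ) - Matrix.of (fun _ _ => (1:ℝ))) := by
      ext ⟨j, i⟩ ⟨j', i'⟩
      simp only [Matrix.reindex_apply, Matrix.submatrix_apply, Equiv.prodComm_symm,
        Equiv.prodComm_apply, Prod.swap_prod_mk, Matrix.sub_apply, Matrix.smul_apply,
        Matrix.of_apply, Matrix.blockDiagonal_apply]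
      rcases eq_or_ne i i' with rfl | hii
      · rcases eq_or_ne j j' with rfl | hjj
        · simp [Matrix.one_apply]
        · simp [Matrix.one_apply, hjj, Prod.ext_iff]
      · simp [Matrix.one_apply, hii, Prod.ext_iff]
    rw [this, Matrix.det_blockDiagonal]
    have h2det : det ((t+1) • (1 : Matrix (Fin 2) (Fin 2) ℝ) - Matrix.of (fun _ _ => (1:ℝ)))
        = (t+1) * (t-1) := by
      rw [det_smul_one_sub_allOnes 2 (by norm_num) (t+1) ht']
      push_cast; ring
    simp [h2det]
  rw [hsecond, det_smul_one_sub_allOnes p hp (t+1) ht']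
  simp only [eval_mul, eval_pow, eval_add, eval_sub, eval_X, eval_one, eval_C]
  rw [pow_add, mul_pow]
  have hcast : t + 1 - (p:ℝ) = t - ((p:ℝ) - 1) := by ring
  rw [hcast]
  ring

def qdIota (M k : ℕ) : ℕ := if k+1 < M then k+1 else k+2

lemma qdIota_lt {M k : ℕ} (hM : 4 ≤ M) (hk : k < 2*M - 2) : qdIota M k < 2*M := by
  unfold qdIota; split <;> omega

lemma qdIota_ne0 {M k : ℕ} : qdIota M k ≠ 0 := by
  unfold qdIota; split <;> omega

lemma qdIota_neM {M k : ℕ} (hM : 4 ≤ M) : qdIota M k ≠ M := by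
  unfold qdIota; split <;> omega

lemma qdIota_inj {M k l : ℕ} (h : qdIota M k = qdIota M l) : k = l := by
  unfold qdIota at h; split at h <;> split at h <;> omega

lemma qdIota_surj {M i : ℕ} (hM : 4 ≤ M) (h1 : i < 2*M) (h2 : i ≠ 0) (h3 : i ≠ M) :
    ∃ k, k < 2*M - 2 ∧ qdIota M k = i := by
  by_cases hc : i < M
  · exact ⟨i-1, by omega, by unfold qdIota; split <;> omega⟩
  · exact ⟨i-2, by omega, by unfold qdIota; split <;> omega⟩


/-- For `n ≥ 4`, the spectrum of the commuting graph of the quasidihedral group `QD_{2^n}`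
is `{(-1)^{2^n - 2^{n-2} - 3}, 1^{2^{n-2}}, (2^{n-1} - 3)^1}`. -/
theorem spec_commGraph_quasidihedral
    (n : ℕ) (hn : 4 ≤ n) (G : Type*) [Group G] [Finite G]
    (a b : G) (ha : orderOf a = 2 ^ (n - 1)) (hb : orderOf b = 2)
    (hrel : b * a * b⁻¹ = a ^ (2 ^ (n - 2) - 1))
    (hcard : Nat.card G = 2 ^ n)
    (hgen : Subgroup.closure ({a, b} : Set G) = ⊤) :
    commCharpoly G =
      (X + 1) ^ (2 ^ n - 2 ^ (n - 2) - 3) * (X - 1) ^ (2 ^ (n - 2))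
        * (X - C ((2 : ℝ) ^ (n - 1) - 3)) := by

  classical
  -- numerical facts
  have hM4 : 4 ≤ 2^(n-2) := by
    calc (4:ℕ) = 2^2 := by norm_num
    _ ≤ 2^(n-2) := Nat.pow_le_pow_right (by norm_num) (by omega)
  have hK2 : 2 ≤ 2^(n-3) := by
    calc (2:ℕ) = 2^1 := by norm_num
    _ ≤ 2^(n-3) := Nat.pow_le_pow_right (by norm_num) (by omega)
  have hKeven : Even (2^(n-3) : ℕ) :=
    ⟨2^(n-4), by rw [show n-3 = (n-4)+1 by omega, pow_succ]; ring⟩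
  have hNM : (2^(n-1):ℕ) = 2 * 2^(n-2) := by
    rw [show n-1 = (n-2)+1 by omega, pow_succ]; ring
  have hNK : (2^(n-1):ℕ) = 4 * 2^(n-3) := by
    rw [show n-1 = (n-3)+2 by omega, pow_add]; ring
  have hMK : (2^(n-2):ℕ) = 2 * 2^(n-3) := by
    rw [show n-2 = (n-3)+1 by omega, pow_succ]; ring
  have h2n : (2^n : ℕ) = 2 * 2^(n-1) := by
    rw [← pow_succ']; congr 1; omega
  have hM1 : 1 ≤ (2^(n-2):ℕ) := by omega
  -- basic group facts
  have h_bsq : b * b = 1 := by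
    have h := pow_orderOf_eq_one b; rw [hb, pow_two] at h; exact h
  have h_binv : b⁻¹ = b := by rw [inv_eq_iff_mul_eq_one]; exact h_bsq
  have h_conj : ∀ k : ℕ, b * a ^ k * b = a ^ ((2^(n-2)-1) * k) := by
    intro k
    have h1 : (b * a * b⁻¹) ^ k = b * a ^ k * b⁻¹ := conj_pow
    rw [hrel, ← pow_mul, h_binv] at h1
    exact h1.symm
  have h_cA : ∀ i j : ℕ, (a^i * b) * a^j = a^(i + (2^(n-2)-1)*j) * b := by
    intro i j
    rw [pow_add, ← h_conj j]
    simp only [mul_assoc, h_bsq, mul_one]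
  have h_cB : ∀ i j : ℕ, (a^i * b) * (a^j * b) = a^(i + (2^(n-2)-1)*j) := by
    intro i j
    rw [← mul_assoc, h_cA, mul_assoc, h_bsq, mul_one]
  have h_powinj : ∀ i j : ℕ, i < 2^(n-1) → j < 2^(n-1) → a^i = a^j → i = j := by
    intro i j hi hj hij
    have h := pow_eq_pow_iff_modEq.mp hij
    rw [ha] at h
    rwa [Nat.ModEq, Nat.mod_eq_of_lt hi, Nat.mod_eq_of_lt hj] at h
  have h_bnot : b ∉ Subgroup.zpowers a := by
    intro hmem
    have hle : Subgroup.closure ({a, b} : Set G) ≤ Subgroup.zpowers a := by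
      rw [Subgroup.closure_le]
      intro x hx
      simp only [Set.mem_insert_iff, Set.mem_singleton_iff] at hx
      rcases hx with h | h
      · rw [h]; exact Subgroup.mem_zpowers a
      · rw [h]; exact hmem
    rw [hgen] at hle
    have htop : Subgroup.zpowers a = ⊤ := top_le_iff.mp hle
    have hcard2 : Nat.card G = 2^(n-1) := by
      rw [← ha, ← Nat.card_zpowers, htop, Subgroup.card_top]
    rw [hcard] at hcard2
    have := Nat.pow_right_injective (le_refl 2) hcard2
    omega
  have h_zconj : ∀ g ∈ Subgroup.zpowers a, b * g * b ∈ Subgroup.zpowers a := by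
    intro g hg
    rcases Subgroup.mem_zpowers_iff.mp hg with ⟨k, hk⟩
    have h1 : (b * a * b⁻¹) ^ k = b * a ^ k * b⁻¹ := conj_zpow
    rw [hrel, h_binv] at h1
    rw [← hk, ← h1]
    exact Subgroup.zpow_mem _ (Subgroup.pow_mem _ (Subgroup.mem_zpowers a) _) k
  -- decomposition of G
  have h_dec0 : ∀ g : G, g ∈ Subgroup.zpowers a ∨ g * b ∈ Subgroup.zpowers a := by
    have hbb : ∀ z : G, b * (b * z) = z := fun z => by
      rw [← mul_assoc, h_bsq, one_mul]
    let S : Subgroup G :=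
      { carrier := {g | g ∈ Subgroup.zpowers a ∨ g * b ∈ Subgroup.zpowers a}
        one_mem' := Or.inl (one_mem _)
        mul_mem' := by
          rintro x y (hx | hx) (hy | hy)
          · exact Or.inl (mul_mem hx hy)
          · refine Or.inr ?_
            rw [mul_assoc]
            exact mul_mem hx hy
          · refine Or.inr ?_
            have hid : x * y * b = (x * b) * (b * y * b) := by
              simp only [mul_assoc, hbb]
            rw [hid]
            exact mul_mem hx (h_zconj y hy)
          · refine Or.inl ?_
            have hid : x * y = (x * b) * (b * (y * b) * b) := by
              simp only [mul_assoc, hbb, h_bsq, mul_one]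
            rw [hid]
            exact mul_mem hx (h_zconj _ hy)
        inv_mem' := by
          rintro x (hx | hx)
          · exact Or.inl (inv_mem hx)
          · refine Or.inr ?_
            have hid : x⁻¹ * b = b * (x * b)⁻¹ * b := by
              rw [_root_.mul_inv_rev, h_binv]
              simp only [mul_assoc, hbb]
            rw [hid]
            exact h_zconj _ (inv_mem hx) }
    have hle : Subgroup.closure ({a, b} : Set G) ≤ S := by
      rw [Subgroup.closure_le]
      intro x hx
      simp only [Set.mem_insert_iff, Set.mem_singleton_iff] at hx
      rcases hx with h | h
      · rw [h]; exact Or.inl (Subgroup.mem_zpowers a)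
      · rw [h]
        exact Or.inr (by rw [h_bsq]; exact one_mem _)
    rw [hgen] at hle
    intro g
    exact hle (Subgroup.mem_top g)
  have h_natrep : ∀ g ∈ Subgroup.zpowers a, ∃ i : ℕ, i < 2^(n-1) ∧ g = a ^ i := by
    intro g hg
    rcases Subgroup.mem_zpowers_iff.mp hg with ⟨k, hk⟩
    have hNpos : (0:ℤ) < ((2^(n-1):ℕ):ℤ) := by positivity
    refine ⟨(k % ((2^(n-1):ℕ):ℤ)).toNat, ?_, ?_⟩
    · have h1 : k % ((2^(n-1):ℕ):ℤ) < ((2^(n-1):ℕ):ℤ) := Int.emod_lt_of_pos k hNpos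
      omega
    · have h2 : (((k % ((2^(n-1):ℕ):ℤ)).toNat : ℤ)) = k % ((2^(n-1):ℕ):ℤ) := by
        have := Int.emod_nonneg k (by omega : ((2^(n-1):ℕ):ℤ) ≠ 0)
        omega
      rw [← hk, ← zpow_natCast, h2]
      rw [show ((2^(n-1):ℕ):ℤ) = (orderOf a : ℤ) by rw [ha]]
      exact (zpow_mod_orderOf a k).symm
  have h_dec : ∀ g : G, (∃ i : ℕ, i < 2^(n-1) ∧ g = a^i) ∨
      (∃ i : ℕ, i < 2^(n-1) ∧ g = a^i * b) := by
    intro g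
    rcases h_dec0 g with hg | hg
    · exact Or.inl (h_natrep g hg)
    · rcases h_natrep _ hg with ⟨i, hi, hgi⟩
      refine Or.inr ⟨i, hi, ?_⟩
      rw [← hgi]
      rw [mul_assoc, h_bsq, mul_one]
  -- divisibility translation
  have h_div : ∀ x : ℤ, ((2^(n-1):ℕ):ℤ) ∣ (((2^(n-2):ℕ):ℤ) - 2) * x ↔
      ((2^(n-2):ℕ):ℤ) ∣ x := by
    intro x
    have e1 : ((2^(n-1):ℕ):ℤ) = ((4 * 2^(n-3):ℕ):ℤ) := Nat.cast_inj.mpr hNK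
    have e2 : ((2^(n-2):ℕ):ℤ) - 2 = 2 * (((2^(n-3):ℕ):ℤ) - 1) := by
      rw [hMK]; push_cast; ring
    have e3 : ((2^(n-2):ℕ):ℤ) = ((2 * 2^(n-3):ℕ):ℤ) := Nat.cast_inj.mpr hMK
    rw [e1, e2, e3]
    exact modhelp _ hKeven hK2 x
  -- commuting conditions
  have h_comm_ab : ∀ i j : ℕ, (a^i * (a^j * b) = (a^j * b) * a^i) ↔ (2^(n-2):ℕ) ∣ i := by
    intro i j
    rw [h_cA j i, ← mul_assoc, ← pow_add]
    have e : ((j + (2^(n-2)-1)*i : ℕ) : ℤ) - ((i + j : ℕ):ℤ) = (((2^(n-2):ℕ):ℤ) - 2) * i := by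
      push_cast [hM1]
      ring
    constructor
    · intro h
      have h' : a^(i+j) = a^(j + (2^(n-2)-1)*i) := mul_right_cancel h
      have hmod := pow_eq_pow_iff_modEq.mp h'
      rw [ha] at hmod
      have hdvd := (Nat.modEq_iff_dvd).mp hmod
      rw [e] at hdvd
      exact_mod_cast (h_div i).mp hdvd
    · intro h
      have h' : a^(i+j) = a^(j + (2^(n-2)-1)*i) := by
        rw [pow_eq_pow_iff_modEq, ha]
        apply (Nat.modEq_iff_dvd).mpr
        rw [e]
        exact (h_div i).mpr (Int.natCast_dvd_natCast.mpr h)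
      rw [h']
  have h_comm_bb : ∀ i j : ℕ,
      ((a^i * b) * (a^j * b) = (a^j * b) * (a^i * b)) ↔ i % 2^(n-2) = j % 2^(n-2) := by
    intro i j
    rw [h_cB i j, h_cB j i, pow_eq_pow_iff_modEq, ha]
    have e : ((j + (2^(n-2)-1)*i : ℕ) : ℤ) - ((i + (2^(n-2)-1)*j : ℕ):ℤ)
        = (((2^(n-2):ℕ):ℤ) - 2) * ((i:ℤ) - (j:ℤ)) := by
      push_cast [hM1]
      ring
    constructor
    · intro h
      have hdvd := (Nat.modEq_iff_dvd).mp h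
      rw [e] at hdvd
      have h2 := (h_div _).mp hdvd
      have h3 : ((2^(n-2):ℕ):ℤ) ∣ ((j:ℤ) - (i:ℤ)) := by
        rw [show (j:ℤ) - (i:ℤ) = -((i:ℤ)-(j:ℤ)) by ring]
        exact dvd_neg.mpr h2
      have h4 : i ≡ j [MOD 2^(n-2)] := (Nat.modEq_iff_dvd).mpr h3
      exact h4
    · intro h
      apply (Nat.modEq_iff_dvd).mpr
      rw [e]
      apply (h_div _).mpr
      have h3 : ((2^(n-2):ℕ):ℤ) ∣ ((j:ℤ) - (i:ℤ)) := (Nat.modEq_iff_dvd).mp h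
      rw [show (i:ℤ) - (j:ℤ) = -((j:ℤ)-(i:ℤ)) by ring]
      exact dvd_neg.mpr h3
  -- center characterization
  have h_center : ∀ x : G, x ∈ Subgroup.center G ↔ (x = 1 ∨ x = a^(2^(n-2))) := by
    intro x
    constructor
    · intro hx
      rcases h_dec x with ⟨i, hi, rfl⟩ | ⟨i, hi, rfl⟩
      · have hcomm : a^i * (a^0 * b) = (a^0 * b) * a^i :=
          (Subgroup.mem_center_iff.mp hx (a^0 * b)).symm
        have hdvd := (h_comm_ab i 0).mp hcomm
        rcases hdvd with ⟨c, rfl⟩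
        have hc2 : c < 2 := by
          by_contra hc
          push_neg at hc
          have : 2^(n-2) * 2 ≤ 2^(n-2) * c := Nat.mul_le_mul_left _ hc
          omega
        interval_cases c
        · exact Or.inl (by simp)
        · exact Or.inr (by rw [mul_one])
      · exfalso
        have hcomm : a^1 * (a^i * b) = (a^i * b) * a^1 := by
          rw [pow_one]
          exact Subgroup.mem_center_iff.mp hx a
        have hdvd := (h_comm_ab 1 i).mp hcomm
        have := Nat.le_of_dvd (by norm_num) hdvd
        omega
    · rintro (rfl | rfl)
      · exact Subgroup.one_mem _
      · rw [Subgroup.mem_center_iff]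
        intro g
        rcases h_dec g with ⟨i, hi, rfl⟩ | ⟨i, hi, rfl⟩
        · rw [← pow_add, ← pow_add, Nat.add_comm]
        · exact ((h_comm_ab (2^(n-2)) i).mpr dvd_rfl).symm
  -- non-centrality of representatives
  have hval1 : ∀ i : ℕ, i < 2^(n-1) → i ≠ 0 → i ≠ 2^(n-2) → (a^i : G) ∉ Subgroup.center G := by
    intro i hi h0 hMi hmem
    rcases (h_center _).mp hmem with h1 | h1
    · exact h0 (h_powinj i 0 hi (by omega) (by rw [pow_zero]; exact h1))
    · exact hMi (h_powinj i (2^(n-2)) hi (by omega) h1)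
  have hval2 : ∀ i : ℕ, (a^i * b : G) ∉ Subgroup.center G := by
    intro i hmem
    apply h_bnot
    rcases (h_center _).mp hmem with h1 | h1
    · rw [eq_inv_of_mul_eq_one_right h1]
      exact Subgroup.inv_mem _ (Subgroup.pow_mem _ (Subgroup.mem_zpowers a) i)
    · have hbval : b = (a^i)⁻¹ * a^(2^(n-2)) := by rw [← h1]; group
      rw [hbval]
      exact Subgroup.mul_mem _
        (Subgroup.inv_mem _ (Subgroup.pow_mem _ (Subgroup.mem_zpowers a) i))
        (Subgroup.pow_mem _ (Subgroup.mem_zpowers a) _)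
  have hi_lt : ∀ k : Fin (2^(n-1)-2), qdIota (2^(n-2)) (k:ℕ) < 2^(n-1) := by
    intro k
    have hk := k.isLt
    have := qdIota_lt hM4 (show (k:ℕ) < 2*2^(n-2) - 2 by omega)
    omega
  have hexp_lt : ∀ (x : Fin (2^(n-2)) × Fin 2),
      (x.1:ℕ) + 2^(n-2)*(x.2:ℕ) < 2^(n-1) := by
    intro x
    have h1 := x.1.isLt
    have h0 := x.2.isLt
    have h2 : (x.2:ℕ) ≤ 1 := by omega
    have h3 : 2^(n-2) * (x.2:ℕ) ≤ 2^(n-2) * 1 := Nat.mul_le_mul_left _ h2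
    omega
  -- the model map
  let f : (Fin (2^(n-1)-2) ⊕ Fin (2^(n-2)) × Fin 2) → {x : G // x ∉ Subgroup.center G} :=
    Sum.elim
      (fun k => ⟨a ^ qdIota (2^(n-2)) (k:ℕ),
        hval1 _ (hi_lt k) qdIota_ne0 (qdIota_neM hM4)⟩)
      (fun x => ⟨a ^ ((x.1:ℕ) + 2^(n-2) * (x.2:ℕ)) * b, hval2 _⟩)
  have habnot : ∀ i j : ℕ, (a:G) ^ i ≠ a ^ j * b := by
    intro i j hc
    apply h_bnot
    have hbval : b = (a ^ j)⁻¹ * a ^ i := by rw [hc]; group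
    rw [hbval]
    exact Subgroup.mul_mem _
      (Subgroup.inv_mem _ (Subgroup.pow_mem _ (Subgroup.mem_zpowers a) j))
      (Subgroup.pow_mem _ (Subgroup.mem_zpowers a) i)
  have hinj : Function.Injective f := by
    rintro (k | x) (l | y) h
    · have h' : (a : G) ^ qdIota (2^(n-2)) (k:ℕ) = a ^ qdIota (2^(n-2)) (l:ℕ) :=
        congrArg Subtype.val h
      exact congrArg Sum.inl (Fin.ext (qdIota_inj (h_powinj _ _ (hi_lt k) (hi_lt l) h')))
    · exact absurd (congrArg Subtype.val h) (habnot _ _)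
    · exact absurd (congrArg Subtype.val h).symm (habnot _ _)
    · have h' : (a:G) ^ ((x.1:ℕ) + 2^(n-2)*(x.2:ℕ)) * b
          = a ^ ((y.1:ℕ) + 2^(n-2)*(y.2:ℕ)) * b := congrArg Subtype.val h
      have h'' := mul_right_cancel h'
      have hexp := h_powinj _ _ (hexp_lt x) (hexp_lt y) h''
      have hx2 := x.2.isLt
      have hy2 := y.2.isLt
      have hx1 := x.1.isLt
      have hy1 := y.1.isLt
      have hx2' : (x.2:ℕ) = 0 ∨ (x.2:ℕ) = 1 := by omega
      have hy2' : (y.2:ℕ) = 0 ∨ (y.2:ℕ) = 1 := by omega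
      have hcomp : (x.1:ℕ) = (y.1:ℕ) ∧ (x.2:ℕ) = (y.2:ℕ) := by
        rcases hx2' with h2a | h2a <;> rcases hy2' with h2b | h2b <;>
          rw [h2a, h2b] at hexp <;> omega
      exact congrArg Sum.inr (Prod.ext (Fin.ext hcomp.1) (Fin.ext hcomp.2))
  have hsurj : Function.Surjective f := by
    rintro ⟨x, hx⟩
    rcases h_dec x with ⟨i, hi, rfl⟩ | ⟨i, hi, rfl⟩
    · have h0 : i ≠ 0 := by
        rintro rfl
        exact hx ((h_center _).mpr (Or.inl (pow_zero a)))
      have hMne : i ≠ 2^(n-2) := by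
        rintro rfl
        exact hx ((h_center _).mpr (Or.inr rfl))
      rcases qdIota_surj hM4 (by omega) h0 hMne with ⟨k, hk1, hk2⟩
      refine ⟨Sum.inl ⟨k, by omega⟩, ?_⟩
      apply Subtype.ext
      show (a : G) ^ qdIota (2^(n-2)) k = a ^ i
      rw [hk2]
    · have hq : i / 2^(n-2) < 2 := Nat.div_lt_of_lt_mul (by omega)
      refine ⟨Sum.inr (⟨i % 2^(n-2), Nat.mod_lt _ (by omega)⟩, ⟨i / 2^(n-2), hq⟩), ?_⟩
      apply Subtype.ext
      show (a:G) ^ (i % 2^(n-2) + 2^(n-2) * (i / 2^(n-2))) * b = a ^ i * b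
      rw [Nat.mod_add_div]
  let e : (Fin (2^(n-1)-2) ⊕ Fin (2^(n-2)) × Fin 2) ≃ {x : G // x ∉ Subgroup.center G} :=
    Equiv.ofBijective f ⟨hinj, hsurj⟩
  have hadj1 : ∀ k l : Fin (2^(n-1)-2),
      (commGraph G).Adj (e (Sum.inl k)) (e (Sum.inl l)) ↔ k ≠ l := by
    intro k l
    constructor
    · rintro ⟨hne, -⟩ 
      intro hkl
      exact hne (by rw [hkl])
    · intro hkl
      refine ⟨fun hc => hkl (Sum.inl.inj (e.injective hc)), ?_⟩
      show (a:G) ^ qdIota (2^(n-2)) (k:ℕ) * a ^ qdIota (2^(n-2)) (l:ℕ)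
        = a ^ qdIota (2^(n-2)) (l:ℕ) * a ^ qdIota (2^(n-2)) (k:ℕ)
      exact ((Commute.refl a).pow_pow _ _).eq
  have hadj2 : ∀ (k : Fin (2^(n-1)-2)) (x : Fin (2^(n-2)) × Fin 2),
      ¬ (commGraph G).Adj (e (Sum.inl k)) (e (Sum.inr x)) := by
    rintro k x ⟨-, hcomm⟩
    have hcomm' : (a:G) ^ (qdIota (2^(n-2)) (k:ℕ)) * (a ^ ((x.1:ℕ) + 2^(n-2)*(x.2:ℕ)) * b)
        = (a ^ ((x.1:ℕ) + 2^(n-2)*(x.2:ℕ)) * b) * a ^ (qdIota (2^(n-2)) (k:ℕ)) := hcomm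
    rcases (h_comm_ab _ _).mp hcomm' with ⟨c, hc⟩
    have hlt := hi_lt k
    have hne0 : qdIota (2^(n-2)) (k:ℕ) ≠ 0 := qdIota_ne0
    have hneM : qdIota (2^(n-2)) (k:ℕ) ≠ 2^(n-2) := qdIota_neM hM4
    rcases c with _ | _ | c
    · omega
    · omega
    · have : 2^(n-2) * 2 ≤ 2^(n-2) * (c+1+1) := Nat.mul_le_mul_left _ (by omega)
      omega
  have hadj3 : ∀ x y : Fin (2^(n-2)) × Fin 2,
      (commGraph G).Adj (e (Sum.inr x)) (e (Sum.inr y)) ↔ x ≠ y ∧ x.1 = y.1 := by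
    intro x y
    have hmodx : ((x.1:ℕ) + 2^(n-2)*(x.2:ℕ)) % 2^(n-2) = (x.1:ℕ) := by
      rw [Nat.add_mul_mod_self_left]
      exact Nat.mod_eq_of_lt x.1.isLt
    have hmody : ((y.1:ℕ) + 2^(n-2)*(y.2:ℕ)) % 2^(n-2) = (y.1:ℕ) := by
      rw [Nat.add_mul_mod_self_left]
      exact Nat.mod_eq_of_lt y.1.isLt
    constructor
    · rintro ⟨hne, hcomm⟩
      have hcomm' : ((a:G) ^ ((x.1:ℕ) + 2^(n-2)*(x.2:ℕ)) * b)
            * (a ^ ((y.1:ℕ) + 2^(n-2)*(y.2:ℕ)) * b)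
          = (a ^ ((y.1:ℕ) + 2^(n-2)*(y.2:ℕ)) * b)
            * (a ^ ((x.1:ℕ) + 2^(n-2)*(x.2:ℕ)) * b) := hcomm
      have hmm := (h_comm_bb _ _).mp hcomm'
      rw [hmodx, hmody] at hmm
      refine ⟨fun hc => hne (by rw [hc]), Fin.ext hmm⟩
    · rintro ⟨hne, h11⟩
      refine ⟨fun hc => hne (Sum.inr.inj (e.injective hc)), ?_⟩
      show ((a:G) ^ ((x.1:ℕ) + 2^(n-2)*(x.2:ℕ)) * b)
            * (a ^ ((y.1:ℕ) + 2^(n-2)*(y.2:ℕ)) * b)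
          = (a ^ ((y.1:ℕ) + 2^(n-2)*(y.2:ℕ)) * b)
            * (a ^ ((x.1:ℕ) + 2^(n-2)*(x.2:ℕ)) * b)
      apply (h_comm_bb _ _).mpr
      rw [hmodx, hmody, h11]
  -- final assembly
  unfold commCharpoly
  letI : Fintype G := Fintype.ofFinite G
  show (SimpleGraph.adjMatrix ℝ (commGraph G)).charpoly = _
  refine (charpoly_of_model (commGraph G) (2^(n-1)-2) (2^(n-2)) (by omega)
    e hadj1 hadj2 hadj3).trans ?_
  have e1 : 2^(n-1) - 2 - 1 + 2^(n-2) = 2^n - 2^(n-2) - 3 := by omega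
  have e2 : ((2^(n-1) - 2 : ℕ) : ℝ) - 1 = (2:ℝ)^(n-1) - 3 := by
    rw [Nat.cast_sub (by omega : 2 ≤ 2^(n-1))]
    push_cast
    ring
  rw [e1, e2]
end

section
/- For n ≥ 2, the commuting graph of the generalized quaternion group Q_{4n} = ⟨x, y : y^{2n} = 1, x^2 = y^n, xyx^{-1} = y^{-1}⟩ is isomorphic to K_{2n-2} ⊔ n·K_2, and its spectrum is {(-1) with multiplicity 3n - 3, 1 with multiplicity n, (2n - 3) with multiplicity 1}. -/
open Polynomial

instance (k m : ℕ) : DecidableRel (completeUnion k m).Adj := fun x y =>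
  inferInstanceAs (Decidable (_ ∧ _))

instance {α β : Type*} (G : SimpleGraph α) (H : SimpleGraph β) [DecidableRel G.Adj]
    [DecidableRel H.Adj] : DecidableRel (G ⊕g H).Adj
  | Sum.inl a, Sum.inl b => inferInstanceAs (Decidable (G.Adj a b))
  | Sum.inl _, Sum.inr _ => inferInstanceAs (Decidable ((false : Bool) = true))
  | Sum.inr _, Sum.inl _ => inferInstanceAs (Decidable ((false : Bool) = true))
  | Sum.inr a, Sum.inr b => inferInstanceAs (Decidable (H.Adj a b))

namespace CGQAux

open QuaternionGroup

lemma cg_add_self_eq_zero_iff {n : ℕ} (hn : 1 ≤ n) (i : ZMod (2 * n)) :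
    i + i = 0 ↔ i = 0 ∨ i = (n : ZMod (2 * n)) := by
  haveI : NeZero (2 * n) := ⟨by omega⟩
  constructor
  · intro h
    have hv : ((i.val : ℕ) : ZMod (2 * n)) = i := ZMod.natCast_rightInverse i
    have hlt : i.val < 2 * n := ZMod.val_lt i
    rw [← hv, ← Nat.cast_add, ZMod.natCast_eq_zero_iff] at h
    obtain ⟨c, hc⟩ := h
    have hc2 : c < 2 := by nlinarith
    have : i.val = 0 ∨ i.val = n := by interval_cases c <;> omega
    rcases this with h | h
    · left; rw [← hv, h]; simp
    · right; rw [← hv, h]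
  · rintro (rfl | rfl)
    · simp
    · rw [← Nat.cast_add, show n + n = 2 * n by ring, ZMod.natCast_self]

lemma cg_a_mem_center_iff {n : ℕ} (hn : 1 ≤ n) (i : ZMod (2 * n)) :
    a i ∈ Subgroup.center (QuaternionGroup n) ↔ i = 0 ∨ i = (n : ZMod (2 * n)) := by
  rw [Subgroup.mem_center_iff, ← cg_add_self_eq_zero_iff hn]
  constructor
  · intro h
    have h1 := h (xa 0)
    rw [xa_mul_a, a_mul_xa] at h1
    simp only [xa.injEq, zero_add, zero_sub] at h1
    linear_combination h1
  · intro h g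
    have hi : -i = i := by linear_combination -h
    rcases g with j | j
    · rw [a_mul_a, a_mul_a, add_comm]
    · rw [xa_mul_a, a_mul_xa, sub_eq_add_neg, hi]

lemma cg_xa_not_mem_center {n : ℕ} (hn : 2 ≤ n) (i : ZMod (2 * n)) :
    xa i ∉ Subgroup.center (QuaternionGroup n) := by
  rw [Subgroup.mem_center_iff]
  intro h
  have h1 := h (a 1)
  rw [a_mul_xa, xa_mul_a] at h1
  simp only [xa.injEq] at h1
  have h3 : ((2 : ℕ) : ZMod (2 * n)) = 0 := by push_cast; linear_combination -h1
  rw [ZMod.natCast_eq_zero_iff] at h3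
  have := Nat.le_of_dvd (by norm_num) h3
  omega

/-- commuting condition for `xa i`, `xa j` -/
lemma cg_xa_commute_iff {n : ℕ} (hn : 1 ≤ n) (i j : ZMod (2 * n)) :
    xa i * xa j = xa j * xa i ↔ j = i ∨ j = i + (n : ZMod (2 * n)) := by
  rw [xa_mul_xa, xa_mul_xa]
  simp only [a.injEq]
  constructor
  · intro h
    have h2 : (j - i) + (j - i) = 0 := by linear_combination h
    rcases (cg_add_self_eq_zero_iff hn _).mp h2 with h3 | h3
    · left; linear_combination h3
    · right; linear_combination h3
  · rintro (rfl | rfl) <;> ring_nf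
    have : ((n : ZMod (2 * n)) + n) = 0 := by
      rw [← Nat.cast_add, show n + n = 2 * n by ring, ZMod.natCast_self]
    linear_combination this

lemma cg_mod_eq_iff {n : ℕ} (hn : 2 ≤ n) [NeZero (2 * n)] (i j : ZMod (2 * n)) :
    i.val % n = j.val % n ↔ i = j ∨ j = i + (n : ZMod (2 * n)) := by
  have hv_i : ((i.val : ℕ) : ZMod (2 * n)) = i := ZMod.natCast_rightInverse i
  have hv_j : ((j.val : ℕ) : ZMod (2 * n)) = j := ZMod.natCast_rightInverse j
  have hlt_i : i.val < 2 * n := ZMod.val_lt i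
  have hlt_j : j.val < 2 * n := ZMod.val_lt j
  have h2n : ((2 * n : ℕ) : ZMod (2 * n)) = 0 := ZMod.natCast_self _
  constructor
  · intro h
    have hdi : i.val / n < 2 := (Nat.div_lt_iff_lt_mul (by omega)).mpr (by omega)
    have hdj : j.val / n < 2 := (Nat.div_lt_iff_lt_mul (by omega)).mpr (by omega)
    have ei : i.val % n + n * (i.val / n) = i.val := Nat.mod_add_div _ _
    have ej : j.val % n + n * (j.val / n) = j.val := Nat.mod_add_div _ _
    interval_cases hb1 : (i.val / n) <;> interval_cases hb2 : (j.val / n)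
    · left; rw [← hv_i, ← hv_j]; congr 1; omega
    · right
      rw [← hv_i, ← hv_j, show j.val = i.val + n by omega]
      push_cast; ring
    · right
      rw [← hv_i, ← hv_j, show i.val = j.val + n by omega]
      push_cast
      rw [show ((j.val : ZMod (2 * n)) + n + n) =
        (j.val : ZMod (2 * n)) + ((2 * n : ℕ) : ZMod (2 * n)) by push_cast; ring, h2n, add_zero]
    · left; rw [← hv_i, ← hv_j]; congr 1; omega
  · rintro (rfl | rfl)
    · rfl
    · have : i + (n : ZMod (2 * n)) = ((i.val + n : ℕ) : ZMod (2 * n)) := by push_cast; rw [hv_i]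
      rw [this, ZMod.val_natCast]
      conv_rhs => rw [Nat.mod_mod_of_dvd _ ⟨2, by ring⟩]
      exact (Nat.add_mod_right _ _).symm

/-- encoding of non-central rotations -/
def encA (n : ℕ) (hn : 2 ≤ n) [NeZero (2 * n)] (i : ZMod (2 * n)) : Fin (2 * n - 2) :=
  ⟨if i.val < n then i.val - 1 else i.val - 2, by
    have hlt : i.val < 2 * n := ZMod.val_lt i
    split <;> omega⟩

/-- encoding of reflections -/
def encXa (n : ℕ) (hn : 2 ≤ n) [NeZero (2 * n)] (i : ZMod (2 * n)) : Fin n × Fin 2 :=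
  (⟨i.val % n, Nat.mod_lt _ (by omega)⟩, ⟨(i.val / n) % 2, Nat.mod_lt _ (by norm_num)⟩)

/-- forward map on raw group elements -/
def cgFwd (n : ℕ) (hn : 2 ≤ n) [NeZero (2 * n)] :
    QuaternionGroup n → Fin (2 * n - 2) ⊕ Fin n × Fin 2
  | .a i => Sum.inl (encA n hn i)
  | .xa i => Sum.inr (encXa n hn i)

def cgBwd (n : ℕ) : Fin (2 * n - 2) ⊕ Fin n × Fin 2 → QuaternionGroup n
  | .inl k => .a ((if (k : ℕ) < n - 1 then (k : ℕ) + 1 else (k : ℕ) + 2 : ℕ) : ZMod (2 * n))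
  | .inr (k, b) => .xa (((k : ℕ) + n * (b : ℕ) : ℕ) : ZMod (2 * n))

def cgEquiv (n : ℕ) (hn : 2 ≤ n) [NeZero (2 * n)] :
    {g : QuaternionGroup n // g ∉ Subgroup.center (QuaternionGroup n)} ≃
      (Fin (2 * n - 2) ⊕ Fin n × Fin 2) := by
  refine
  { toFun := fun g => cgFwd n hn (g : QuaternionGroup n)
    invFun := fun s => ⟨cgBwd n s, ?_⟩
    left_inv := ?_
    right_inv := ?_ }
  · rcases s with k | ⟨k, b⟩
    · simp only [cgBwd]
      rw [cg_a_mem_center_iff (by omega)]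
      have hk : (k : ℕ) < 2 * n - 2 := k.2
      set m : ℕ := if (k : ℕ) < n - 1 then (k : ℕ) + 1 else (k : ℕ) + 2 with hm
      have hm1 : 1 ≤ m ∧ m < 2 * n ∧ m ≠ n := by
        rw [hm]; split <;> omega
      rintro (h | h)
      · have := ZMod.val_cast_of_lt (show m < 2 * n by omega) ▸ congrArg ZMod.val h
        simp [ZMod.val_zero] at this; omega
      · have h2 := congrArg ZMod.val h
        rw [ZMod.val_cast_of_lt (show m < 2 * n by omega),
            ZMod.val_cast_of_lt (show n < 2 * n by omega)] at h2
        exact hm1.2.2 h2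
    · exact cg_xa_not_mem_center hn _
  · rintro ⟨(i | i), hg⟩ <;> apply Subtype.ext
    · rw [cg_a_mem_center_iff (by omega)] at hg
      push_neg at hg
      obtain ⟨h0, hn'⟩ := hg
      have hv : ((i.val : ℕ) : ZMod (2 * n)) = i := ZMod.natCast_rightInverse i
      have hlt : i.val < 2 * n := ZMod.val_lt i
      have hv0 : i.val ≠ 0 := fun h => h0 (by rw [← hv, h]; simp)
      have hvn : i.val ≠ n := fun h => hn' (by rw [← hv, h])
      simp only [cgFwd, cgBwd, encA]
      rcases Nat.lt_or_ge i.val n with h | h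
      · rw [if_pos h, if_pos (by omega), show i.val - 1 + 1 = i.val by omega, hv]
      · rw [if_neg (show ¬ i.val < n by omega), if_neg (by omega),
          show i.val - 2 + 2 = i.val by omega, hv]
    · have hv : ((i.val : ℕ) : ZMod (2 * n)) = i := ZMod.natCast_rightInverse i
      have hlt : i.val < 2 * n := ZMod.val_lt i
      simp only [cgFwd, cgBwd, encXa]
      have hd : i.val / n < 2 := (Nat.div_lt_iff_lt_mul (by omega)).mpr (by omega)
      rw [Nat.mod_eq_of_lt hd,
        show i.val % n + n * (i.val / n) = i.val from Nat.mod_add_div _ _, hv]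
  · rintro (k | ⟨k, b⟩)
    · have hk : (k : ℕ) < 2 * n - 2 := k.2
      simp only [cgBwd, cgFwd, encA]
      refine congrArg Sum.inl (Fin.ext ?_)
      dsimp only
      set m : ℕ := if (k : ℕ) < n - 1 then (k : ℕ) + 1 else (k : ℕ) + 2 with hm
      have hmlt : m < 2 * n := by rw [hm]; split <;> omega
      rw [ZMod.val_cast_of_lt hmlt]
      rcases Nat.lt_or_ge (k : ℕ) (n - 1) with h | h
      · have hm' : m = (k : ℕ) + 1 := by simp [hm, h]
        rw [hm', if_pos (by omega)]; omega
      · have hm' : m = (k : ℕ) + 2 := by simp [hm, if_neg (Nat.not_lt.mpr h)]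
        rw [hm', if_neg (by omega)]; omega
    · have hk : (k : ℕ) < n := k.2
      have hb : (b : ℕ) < 2 := b.2
      simp only [cgBwd, cgFwd, encXa]
      refine congrArg Sum.inr (Prod.ext (Fin.ext ?_) (Fin.ext ?_))
      all_goals
        dsimp only
        have hlt : (k : ℕ) + n * (b : ℕ) < 2 * n := by nlinarith
        rw [ZMod.val_cast_of_lt hlt]
      · simp [Nat.add_mul_mod_self_left, Nat.mod_eq_of_lt hk]
      · rw [Nat.add_mul_div_left _ _ (by omega : 0 < n), Nat.div_eq_of_lt hk, zero_add,
          Nat.mod_eq_of_lt hb]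

/-- the graph isomorphism -/
def cgIso (n : ℕ) (hn : 2 ≤ n) [NeZero (2 * n)] :
    commGraph (QuaternionGroup n) ≃g
      ((⊤ : SimpleGraph (Fin (2 * n - 2))) ⊕g completeUnion n 2) := by
  refine ⟨cgEquiv n hn, ?_⟩
  rintro ⟨(i | i), hx⟩ ⟨(j | j), hy⟩
  · -- a i vs a j
    have key : encA n hn i = encA n hn j ↔ i = j := by
      have h := (cgEquiv n hn).apply_eq_iff_eq
        (x := ⟨QuaternionGroup.a i, hx⟩) (y := ⟨QuaternionGroup.a j, hy⟩)
      rw [show (cgEquiv n hn) ⟨QuaternionGroup.a i, hx⟩ = Sum.inl (encA n hn i) from rfl,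
        show (cgEquiv n hn) ⟨QuaternionGroup.a j, hy⟩ = Sum.inl (encA n hn j) from rfl,
        Sum.inl.injEq, Subtype.mk.injEq, a.injEq] at h
      exact h
    show ((⊤ : SimpleGraph (Fin (2 * n - 2))) ⊕g completeUnion n 2).Adj
      (Sum.inl (encA n hn i)) (Sum.inl (encA n hn j)) ↔ _
    simp only [SimpleGraph.sum_adj, SimpleGraph.top_adj]
    constructor
    · intro h
      refine ⟨fun hc => h (key.mpr (a.inj (congrArg Subtype.val hc))), ?_⟩
      rw [a_mul_a, a_mul_a, add_comm]
    · rintro ⟨h, -⟩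
      intro hc
      exact h (Subtype.ext (congrArg QuaternionGroup.a (key.mp hc)))
  · -- a i vs xa j : never adjacent
    show ((⊤ : SimpleGraph (Fin (2 * n - 2))) ⊕g completeUnion n 2).Adj
      (Sum.inl (encA n hn i)) (Sum.inr (encXa n hn j)) ↔ _
    simp only [SimpleGraph.sum_adj]
    constructor
    · intro h; exact absurd h (by simp)
    · rintro ⟨-, hcomm⟩
      exfalso
      rw [a_mul_xa, xa_mul_a] at hcomm
      simp only [xa.injEq] at hcomm
      have : i + i = 0 := by linear_combination -hcomm
      exact hx ((cg_a_mem_center_iff (by omega) i).mpr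
        ((cg_add_self_eq_zero_iff (by omega) i).mp this))
  · -- xa i vs a j
    show ((⊤ : SimpleGraph (Fin (2 * n - 2))) ⊕g completeUnion n 2).Adj
      (Sum.inr (encXa n hn i)) (Sum.inl (encA n hn j)) ↔ _
    simp only [SimpleGraph.sum_adj]
    constructor
    · intro h; exact absurd h (by simp)
    · rintro ⟨-, hcomm⟩
      exfalso
      rw [a_mul_xa, xa_mul_a] at hcomm
      simp only [xa.injEq] at hcomm
      have : j + j = 0 := by linear_combination hcomm
      exact hy ((cg_a_mem_center_iff (by omega) j).mpr
        ((cg_add_self_eq_zero_iff (by omega) j).mp this))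
  · -- xa i vs xa j
    have key : encXa n hn i = encXa n hn j ↔ i = j := by
      have h := (cgEquiv n hn).apply_eq_iff_eq
        (x := ⟨QuaternionGroup.xa i, hx⟩) (y := ⟨QuaternionGroup.xa j, hy⟩)
      rw [show (cgEquiv n hn) ⟨QuaternionGroup.xa i, hx⟩ = Sum.inr (encXa n hn i) from rfl,
        show (cgEquiv n hn) ⟨QuaternionGroup.xa j, hy⟩ = Sum.inr (encXa n hn j) from rfl,
        Sum.inr.injEq, Subtype.mk.injEq, xa.injEq] at h
      exact h
    show ((⊤ : SimpleGraph (Fin (2 * n - 2))) ⊕g completeUnion n 2).Adj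
      (Sum.inr (encXa n hn i)) (Sum.inr (encXa n hn j)) ↔ _
    simp only [SimpleGraph.sum_adj]
    show (completeUnion n 2).Adj _ _ ↔ _
    have hfst : (encXa n hn i).1 = (encXa n hn j).1 ↔ (i = j ∨ j = i + (n : ZMod (2 * n))) := by
      rw [← cg_mod_eq_iff hn]
      exact ⟨fun h => by injection h, fun h => Fin.ext h⟩
    constructor
    · rintro ⟨hne, hfst'⟩
      have hij : i ≠ j := fun hc => hne (by rw [hc])
      refine ⟨fun hc => hij (xa.inj (congrArg Subtype.val hc)), ?_⟩
      rw [cg_xa_commute_iff (by omega)]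
      rcases hfst.mp hfst' with h | h
      · exact absurd h hij
      · exact Or.inr h
    · rintro ⟨hne, hcomm⟩
      have hij : i ≠ j := fun hc => hne (Subtype.ext (congrArg QuaternionGroup.xa hc))
      refine ⟨fun hc => hij (key.mp hc), hfst.mpr ?_⟩
      rw [cg_xa_commute_iff (by omega)] at hcomm
      rcases hcomm with h | h
      · exact Or.inl h.symm
      · exact Or.inr h


lemma eval_charpoly {m : Type*} [Fintype m] [DecidableEq m] (M : Matrix m m ℝ) (x : ℝ) :
    (M.charpoly).eval x = ((x • (1 : Matrix m m ℝ)) - M).det := by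
  rw [Matrix.charpoly, ← Polynomial.coe_evalRingHom, RingHom.map_det]
  congr 1
  ext i j
  by_cases h : i = j <;>
    simp [Matrix.charmatrix_apply, h, Matrix.one_apply, Matrix.diagonal_apply]

lemma charpoly_top (m : ℕ) (hm : 1 ≤ m) :
    (SimpleGraph.adjMatrix ℝ (⊤ : SimpleGraph (Fin m))).charpoly
      = (X + 1) ^ (m - 1) * (X - C ((m : ℝ) - 1)) := by
  apply Polynomial.eq_of_infinite_eval_eq
  apply Set.Infinite.mono (s := {(-1 : ℝ)}ᶜ)
  swap
  · exact Set.Finite.infinite_compl (Set.finite_singleton _)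
  intro x hx
  simp only [Set.mem_compl_iff, Set.mem_singleton_iff] at hx
  have hx1 : x + 1 ≠ 0 := fun h => hx (by linarith)
  show eval x _ = eval x _
  rw [eval_charpoly]
  have hA : x • (1 : Matrix (Fin m) (Fin m) ℝ) - SimpleGraph.adjMatrix ℝ ⊤ =
      (x + 1) • (1 + Matrix.replicateCol Unit (fun _ : Fin m => (1 : ℝ)) *
        Matrix.replicateRow Unit (fun _ : Fin m => -(x + 1)⁻¹)) := by
    ext i j
    by_cases h : i = j <;>
      · simp [h, Matrix.one_apply, Matrix.mul_apply, Matrix.replicateCol, Matrix.replicateRow,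
          Matrix.smul_apply, Matrix.add_apply, Matrix.sub_apply]
        field_simp <;> ring
  rw [hA, Matrix.det_smul, Matrix.det_one_add_replicateCol_mul_replicateRow]
  have hd : dotProduct (fun _ : Fin m => -(x + 1)⁻¹) (fun _ : Fin m => (1 : ℝ))
      = -(m * (x + 1)⁻¹) := by
    simp [dotProduct]
  rw [hd]
  rw [eval_mul, eval_pow, eval_add, eval_X, eval_one, eval_sub, eval_X, eval_C]
  rw [Fintype.card_fin]
  obtain ⟨m', rfl⟩ : ∃ m', m = m' + 1 := ⟨m - 1, by omega⟩
  simp only [Nat.add_sub_cancel, pow_succ]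
  push_cast
  field_simp
  ring


lemma charmatrix_blockDiagonal {o m : Type*} [DecidableEq o] [DecidableEq m] [Fintype o]
    [Fintype m] (M : o → Matrix m m ℝ) :
    Matrix.charmatrix (Matrix.blockDiagonal M) =
      Matrix.blockDiagonal (fun k => Matrix.charmatrix (M k)) := by
  ext ⟨i, k⟩ ⟨j, k'⟩
  by_cases h : k = k'
  · subst h
    by_cases hij : i = j <;>
      simp [Matrix.charmatrix_apply, Matrix.blockDiagonal_apply, Matrix.diagonal_apply, hij,
        Prod.ext_iff]
  · simp [Matrix.charmatrix_apply, Matrix.blockDiagonal_apply, Matrix.diagonal_apply, h,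
      Prod.ext_iff]

lemma charpoly_blockDiagonal {o m : Type*} [DecidableEq o] [DecidableEq m] [Fintype o]
    [Fintype m] (M : o → Matrix m m ℝ) :
    (Matrix.blockDiagonal M).charpoly = ∏ k, (M k).charpoly := by
  rw [Matrix.charpoly, charmatrix_blockDiagonal, Matrix.det_blockDiagonal]
  rfl

lemma charpoly_completeUnion (n : ℕ) :
    (SimpleGraph.adjMatrix ℝ (completeUnion n 2)).charpoly = ((X + 1) * (X - 1)) ^ n := by
  classical
  have hA : SimpleGraph.adjMatrix ℝ (completeUnion n 2) =
      Matrix.reindex (Equiv.prodComm (Fin 2) (Fin n)) (Equiv.prodComm (Fin 2) (Fin n))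
        (Matrix.blockDiagonal (fun _ : Fin n => SimpleGraph.adjMatrix ℝ (⊤ : SimpleGraph (Fin 2)))) := by
    ext ⟨i, a⟩ ⟨j, b⟩
    simp only [Matrix.reindex_apply, Matrix.submatrix_apply, Equiv.prodComm_symm,
      Equiv.prodComm_apply, Prod.swap_prod_mk, Matrix.blockDiagonal_apply,
      SimpleGraph.adjMatrix_apply]
    by_cases h : i = j <;> by_cases h2 : a = b <;>
      simp [completeUnion, h, h2, Prod.ext_iff, Matrix.diagonal_apply]
  rw [hA, Matrix.charpoly_reindex, charpoly_blockDiagonal]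
  have h2 : (SimpleGraph.adjMatrix ℝ (⊤ : SimpleGraph (Fin 2))).charpoly = (X + 1) * (X - 1) := by
    rw [charpoly_top 2 (by norm_num)]
    norm_num
  rw [h2, Finset.prod_const, Finset.card_univ, Fintype.card_fin]

lemma adjMatrix_sum {α β : Type*} [Fintype α] [Fintype β] (G : SimpleGraph α) (H : SimpleGraph β)
    [DecidableRel G.Adj] [DecidableRel H.Adj] [DecidableRel (G ⊕g H).Adj] :
    SimpleGraph.adjMatrix ℝ (G ⊕g H) =
      Matrix.fromBlocks (SimpleGraph.adjMatrix ℝ G) 0 0 (SimpleGraph.adjMatrix ℝ H) := by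
  ext (i | i) (j | j) <;> simp [SimpleGraph.sum_adj, Matrix.fromBlocks]

lemma charpoly_fromBlocks {m o : Type*} [Fintype m] [Fintype o] [DecidableEq m] [DecidableEq o]
    (A : Matrix m m ℝ) (D : Matrix o o ℝ) :
    (Matrix.fromBlocks A 0 0 D).charpoly = A.charpoly * D.charpoly := by
  rw [Matrix.charpoly, Matrix.charmatrix_fromBlocks]
  have h0 : ((0 : Matrix m o ℝ)).map C = 0 := by ext; simp
  have h0' : ((0 : Matrix o m ℝ)).map C = 0 := by ext; simp
  rw [h0, h0', neg_zero, neg_zero, Matrix.det_fromBlocks_zero₂₁]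
  rfl

lemma charpoly_of_iso {V W : Type*} [Fintype V] [Fintype W] [DecidableEq V] [DecidableEq W]
    (G : SimpleGraph V) (H : SimpleGraph W) [DecidableRel G.Adj] [DecidableRel H.Adj]
    (e : G ≃g H) :
    (SimpleGraph.adjMatrix ℝ G).charpoly = (SimpleGraph.adjMatrix ℝ H).charpoly := by
  have hA : SimpleGraph.adjMatrix ℝ G =
      Matrix.reindex e.toEquiv.symm e.toEquiv.symm (SimpleGraph.adjMatrix ℝ H) := by
    ext i j
    simp only [Matrix.reindex_apply, Equiv.symm_symm, Matrix.submatrix_apply,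
      SimpleGraph.adjMatrix_apply, RelIso.coe_fn_toEquiv]
    by_cases h : G.Adj i j
    · rw [if_pos h, if_pos (e.map_adj_iff.mpr h)]
    · rw [if_neg h, if_neg (fun hc => h (e.map_adj_iff.mp hc))]
  rw [hA, Matrix.charpoly_reindex]


end CGQAux

lemma commCharpoly_eq (G : Type*) [Group G] [Finite G]
    [Fintype {x : G // x ∉ Subgroup.center G}] [DecidableEq {x : G // x ∉ Subgroup.center G}]
    [DecidableRel (commGraph G).Adj] :
    commCharpoly G = (SimpleGraph.adjMatrix ℝ (commGraph G)).charpoly := by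
  unfold commCharpoly
  congr!

/-- For `n ≥ 2`, the commuting graph of the generalized quaternion group `Q_{4n}` is
isomorphic to `K_{2n-2} ⊔ n·K_2`, and its spectrum is
`{(-1)^{3n-3}, 1^n, (2n-3)^1}`. -/
theorem commGraph_quaternionGroup (n : ℕ) (hn : 2 ≤ n) :
    haveI : NeZero n := ⟨by omega⟩
    Nonempty (commGraph (QuaternionGroup n) ≃g
        ((⊤ : SimpleGraph (Fin (2 * n - 2))) ⊕g completeUnion n 2)) ∧
      commCharpoly (QuaternionGroup n) =
        (X + 1) ^ (3 * n - 3) * (X - 1) ^ n * (X - C (2 * (n : ℝ) - 3)) := by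
  haveI : NeZero n := ⟨by omega⟩
  haveI : NeZero (2 * n) := ⟨by omega⟩
  refine ⟨⟨CGQAux.cgIso n hn⟩, ?_⟩
  classical
  rw [commCharpoly_eq]
  refine (CGQAux.charpoly_of_iso _ _ (CGQAux.cgIso n hn)).trans ?_
  rw [CGQAux.adjMatrix_sum,
    CGQAux.charpoly_fromBlocks, CGQAux.charpoly_top (2 * n - 2) (by omega),
    CGQAux.charpoly_completeUnion]
  have hc : ((2 * n - 2 : ℕ) : ℝ) - 1 = 2 * (n : ℝ) - 3 := by
    rw [Nat.cast_sub (by omega : 2 ≤ 2 * n)]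
    push_cast; ring
  rw [hc, show 2 * n - 2 - 1 = 2 * n - 3 from by omega, mul_pow,
    show 3 * n - 3 = (2 * n - 3) + n from by omega, pow_add]
  ring
end
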